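/- Let ρ : ℝ → (0,∞) be a C¹ 2π-periodic function, let a, α ∈ ℝ, and define the radial graph γ(θ) := ρ(θ)(cos θ, sin θ) in ℝ². Suppose that for all θ, ρ'(θ) = a cos(θ + α) · √(ρ(θ)² + ρ'(θ)²) (i.e. r_s = a cos(θ+α) along the curve). Then the image of γ is a circle: there exist c ∈ ℝ² and R > 0 such that |γ(θ) − c| = R for all θ. -/

import Mathlib

open Real Set

noncomputable section

/-- A `C¹` radial graph `γ(θ) = ρ(θ)(cos θ, sin θ)` in `ℝ²` satisfying
`r_s = a cos(θ + α)`, i.e. `ρ' = a cos(θ+α) √(ρ² + ρ'²)`, is a (possibly translated)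
circle. -/
theorem euclidean_radial_graph_is_circle
    (ρ : ℝ → ℝ) (hρC1 : ContDiff ℝ 1 ρ)
    (hρper : ∀ θ, ρ (θ + 2 * π) = ρ θ)
    (hρpos : ∀ θ, 0 < ρ θ)
    (a α : ℝ)
    (hode : ∀ θ : ℝ,
      deriv ρ θ = a * Real.cos (θ + α) * Real.sqrt ((ρ θ) ^ 2 + (deriv ρ θ) ^ 2)) :
    ∃ c₁ c₂ R : ℝ, 0 < R ∧ ∀ θ : ℝ,
      (ρ θ * Real.cos θ - c₁) ^ 2 + (ρ θ * Real.sin θ - c₂) ^ 2 = R ^ 2 := by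
  have hs_pos : ∀ θ, 0 < Real.sqrt ((ρ θ) ^ 2 + (deriv ρ θ) ^ 2) := by
    intro θ
    apply Real.sqrt_pos.2
    have := pow_pos (hρpos θ) 2
    nlinarith [sq_nonneg (deriv ρ θ)]
  have hs_sq : ∀ θ, Real.sqrt ((ρ θ) ^ 2 + (deriv ρ θ) ^ 2) ^ 2
      = (ρ θ) ^ 2 + (deriv ρ θ) ^ 2 := by
    intro θ
    apply Real.sq_sqrt
    positivity
  -- a^2 < 1
  have ha2 : a ^ 2 < 1 := by
    by_contra h
    push_neg at h
    have h1 : deriv ρ (-α) = a * Real.sqrt ((ρ (-α)) ^ 2 + (deriv ρ (-α)) ^ 2) := by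
      simpa using hode (-α)
    have h2 : deriv ρ (-α) ^ 2
        = a ^ 2 * ((ρ (-α)) ^ 2 + (deriv ρ (-α)) ^ 2) := by
      conv_lhs => rw [h1, mul_pow, hs_sq]
    nlinarith [pow_pos (hρpos (-α)) 2, sq_nonneg (deriv ρ (-α))]
  -- W
  set W : ℝ → ℝ := fun θ => Real.sqrt (1 - a ^ 2 * Real.cos (θ + α) ^ 2) with hWdef
  have hinner_pos : ∀ θ, 0 < 1 - a ^ 2 * Real.cos (θ + α) ^ 2 := by
    intro θ
    nlinarith [Real.cos_sq_le_one (θ + α), sq_nonneg a, sq_nonneg (Real.cos (θ + α))]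
  have hW_pos : ∀ θ, 0 < W θ := fun θ => Real.sqrt_pos.2 (hinner_pos θ)
  have hW_sq : ∀ θ, W θ ^ 2 = 1 - a ^ 2 * Real.cos (θ + α) ^ 2 := fun θ =>
    Real.sq_sqrt (hinner_pos θ).le
  -- s * W = ρ
  have hsW : ∀ θ, Real.sqrt ((ρ θ) ^ 2 + (deriv ρ θ) ^ 2) * W θ = ρ θ := by
    intro θ
    have h1 : deriv ρ θ ^ 2 = (a * Real.cos (θ + α)) ^ 2
        * ((ρ θ) ^ 2 + (deriv ρ θ) ^ 2) := by
      conv_lhs => rw [hode θ, mul_pow, hs_sq]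
    have hsq : (Real.sqrt ((ρ θ) ^ 2 + (deriv ρ θ) ^ 2) * W θ) ^ 2 = (ρ θ) ^ 2 := by
      rw [mul_pow, hW_sq, hs_sq]
      linear_combination h1
    nlinarith [hs_pos θ, hW_pos θ, hρpos θ, mul_pos (hs_pos θ) (hW_pos θ)]
  -- key ODE identity without sqrt
  have hkey : ∀ θ, deriv ρ θ * W θ = a * Real.cos (θ + α) * ρ θ := by
    intro θ
    rw [hode θ]
    linear_combination a * Real.cos (θ + α) * hsW θ
  -- g
  set g : ℝ → ℝ := fun θ => a * Real.sin (θ + α) + W θ with hgdef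
  have hg_pos : ∀ θ, 0 < g θ := by
    intro θ
    have h1 : (a * Real.sin (θ + α)) ^ 2 < W θ ^ 2 := by
      rw [hW_sq]
      nlinarith [Real.sin_sq_add_cos_sq (θ + α), sq_nonneg (Real.sin (θ + α))]
    simp only [hgdef]
    nlinarith [hW_pos θ, sq_nonneg (a * Real.sin (θ + α) + W θ)]
  -- derivative of g
  have hg_deriv : ∀ θ, HasDerivAt g (a * Real.cos (θ + α) * g θ / W θ) θ := by
    intro θ
    have h1 : HasDerivAt (fun t : ℝ => t + α) 1 θ := (hasDerivAt_id θ).add_const α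
    have hsin : HasDerivAt (fun t => a * Real.sin (t + α)) (a * (Real.cos (θ + α) * 1)) θ :=
      (h1.sin).const_mul a
    have hcos : HasDerivAt (fun t => Real.cos (t + α)) (-Real.sin (θ + α) * 1) θ := h1.cos
    have hinner : HasDerivAt (fun t => 1 - a ^ 2 * Real.cos (t + α) ^ 2)
        (-(a ^ 2 * ((2 : ℕ) * Real.cos (θ + α) ^ 1 * (-Real.sin (θ + α) * 1)))) θ :=
      ((hcos.pow 2).const_mul (a ^ 2)).const_sub 1
    have hWd : HasDerivAt W
        ((-(a ^ 2 * ((2 : ℕ) * Real.cos (θ + α) ^ 1 * (-Real.sin (θ + α) * 1)))) /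
          (2 * Real.sqrt (1 - a ^ 2 * Real.cos (θ + α) ^ 2))) θ :=
      hinner.sqrt (hinner_pos θ).ne'
    have h2 := hsin.add hWd
    refine h2.congr_deriv ?_
    have hWne : W θ ≠ 0 := (hW_pos θ).ne'
    have hWθ : Real.sqrt (1 - a ^ 2 * Real.cos (θ + α) ^ 2) = W θ := rfl
    rw [hWθ]
    simp only [hgdef]
    field_simp
    push_cast
    nlinarith [hW_sq θ]
  -- ρ/g is constant
  have hρd : ∀ θ, HasDerivAt ρ (deriv ρ θ) θ := fun θ =>
    ((hρC1.differentiable one_ne_zero) θ).hasDerivAt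
  have hF : ∀ θ, HasDerivAt (fun t => ρ t / g t) 0 θ := by
    intro θ
    have h := (hρd θ).div (hg_deriv θ) (hg_pos θ).ne'
    refine h.congr_deriv (Eq.symm ?_)
    have hWne : W θ ≠ 0 := (hW_pos θ).ne'
    have hgne : g θ ≠ 0 := (hg_pos θ).ne'
    field_simp
    linear_combination (-1 : ℝ) * hkey θ
  have hconst : ∀ θ, ρ θ / g θ = ρ 0 / g 0 :=
    fun θ => is_const_of_deriv_eq_zero (fun x => (hF x).differentiableAt)
      (fun x => (hF x).deriv) θ 0
  set K : ℝ := ρ 0 / g 0 with hK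
  have hK_pos : 0 < K := div_pos (hρpos 0) (hg_pos 0)
  have hρK : ∀ θ, ρ θ = K * g θ := by
    intro θ
    rw [hK, div_mul_eq_mul_div, eq_div_iff (hg_pos 0).ne']
    have := (div_eq_div_iff (hg_pos θ).ne' (hg_pos 0).ne').1 (hconst θ)
    linarith [this]
  refine ⟨K * a * Real.sin α, K * a * Real.cos α, K, hK_pos, fun θ => ?_⟩
  have hρθ : ρ θ = K * (a * (Real.sin θ * Real.cos α + Real.cos θ * Real.sin α) + W θ) := by
    rw [hρK θ]; simp only [hgdef]; rw [Real.sin_add]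
  rw [hρθ]
  have f1 : Real.sin θ ^ 2 + Real.cos θ ^ 2 = 1 := Real.sin_sq_add_cos_sq θ
  have f4 : W θ ^ 2 = 1 - a ^ 2
      * (Real.cos θ * Real.cos α - Real.sin θ * Real.sin α) ^ 2 := by
    rw [hW_sq θ, Real.cos_add]
  linear_combination
    ((K * (a * (Real.sin θ * Real.cos α + Real.cos θ * Real.sin α) + W θ)) ^ 2
      - K ^ 2 * a ^ 2 * (Real.sin α ^ 2 + Real.cos α ^ 2)) * f1 + K ^ 2 * f4
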